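/- Let c ≥ 1, Ψ(q¹, p₁, q², p₂) = (q¹ − c·q², p₁, q², c·p₁ + p₂), and π : ℝ⁴ → (ℝ/ℤ) × ℝ × ℝ × (ℝ/cℤ) the canonical projection. For every Q² ∈ (0,1) and P̄₂ ∈ ℝ/cℤ, the section U_{Q²,P̄₂} = { (Q̄¹, P₁) ∈ (ℝ/ℤ) × (0,1) : (Q̄¹, P₁, Q², P̄₂) ∈ (π∘Ψ)((0,1)⁴) } equals the product V_{Q²} × W_{P̄₂}, where V_{Q²} = (ℝ/ℤ) \ {−c·Q² + ℤ} and W_{P̄₂} = { P₁ ∈ (0,1) : ∃ p₂ ∈ (0,1), c·P₁ + p₂ + cℤ = P̄₂ }. -/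
import Mathlib


open Set

lemma coe_one_eq_iff (x y : ℝ) :
    ((x : AddCircle (1:ℝ)) = (y : AddCircle (1:ℝ))) ↔ ∃ n : ℤ, x - y = n := by
  rw [show ((x : AddCircle (1:ℝ)) = (y : AddCircle (1:ℝ))) ↔ _ from
    QuotientAddGroup.eq_iff_sub_mem]
  constructor
  · intro h
    obtain ⟨n, hn⟩ := AddSubgroup.mem_zmultiples_iff.mp h
    exact ⟨n, by simpa [zsmul_eq_mul] using hn.symm⟩
  · rintro ⟨n, hn⟩
    exact AddSubgroup.mem_zmultiples_iff.mpr ⟨n, by simp [zsmul_eq_mul, hn]⟩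

/-- For `c ≥ 1`, `Q² ∈ (0,1)` and `P̄₂ ∈ ℝ/cℤ`, the section
`U = {(Q̄¹,P₁) ∈ (ℝ/ℤ)×(0,1) | (Q̄¹,P₁,Q²,P̄₂) ∈ (π∘Ψ)((0,1)⁴)}` equals the product
`V_{Q²} × W_{P̄₂}` with `V_{Q²} = (ℝ/ℤ) \ {-c Q² + ℤ}` and
`W_{P̄₂} = {P₁ ∈ (0,1) | ∃ p₂ ∈ (0,1), c P₁ + p₂ ≡ P̄₂ mod cℤ}`. -/
theorem stmt7 (c : ℝ) (hc : 1 ≤ c) (Q2 : ℝ) (hQ2 : Q2 ∈ Ioo (0:ℝ) 1) (P2 : AddCircle c) :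
    {y : AddCircle (1:ℝ) × ℝ | y.2 ∈ Ioo (0:ℝ) 1 ∧
        ∃ x ∈ Ioo (0:ℝ) 1 ×ˢ Ioo (0:ℝ) 1 ×ˢ Ioo (0:ℝ) 1 ×ˢ Ioo (0:ℝ) 1,
          (((x.1 - c * x.2.2.1 : ℝ) : AddCircle (1:ℝ)), x.2.1, x.2.2.1,
            ((c * x.2.1 + x.2.2.2 : ℝ) : AddCircle c))
            = (y.1, y.2, Q2, P2)}
      = (({((-(c * Q2) : ℝ) : AddCircle (1:ℝ))} : Set (AddCircle (1:ℝ)))ᶜ) ×ˢ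
        {P1 : ℝ | P1 ∈ Ioo (0:ℝ) 1 ∧
          ∃ p2 ∈ Ioo (0:ℝ) 1, ((c * P1 + p2 : ℝ) : AddCircle c) = P2} := by
  ext ⟨y1, y2⟩
  simp only [mem_setOf_eq, mem_prod, mem_compl_iff, mem_singleton_iff, Prod.mk.injEq,
    mem_Ioo]
  constructor
  · rintro ⟨hy2, ⟨q1, p1, q2, p2⟩, ⟨hq1, hp1, hq2, hp2⟩, h1, h2, h3, h4⟩
    dsimp only at h1 h2 h3 h4 hq1 hp1 hq2 hp2
    subst h3
    subst h2
    refine ⟨?_, ⟨hy2, p2, hp2, h4⟩⟩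
    rw [← h1]
    intro h
    rw [coe_one_eq_iff] at h
    obtain ⟨n, hn⟩ := h
    have : q1 = (n : ℝ) := by linarith
    rcases hq1 with ⟨h0, h1'⟩
    rw [this] at h0 h1'
    have : (0:ℤ) < n := by exact_mod_cast h0
    have : n < 1 := by exact_mod_cast h1'
    omega
  · rintro ⟨hy1, hy2, p2, hp2, hP2⟩
    induction y1 using QuotientAddGroup.induction_on with
    | H a =>
      set q1 := Int.fract (a + c * Q2) with hq1def
      have hq1lt : q1 < 1 := Int.fract_lt_one _
      have hq1ne : q1 ≠ 0 := by
        intro h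
        apply hy1
        rw [coe_one_eq_iff]
        refine ⟨⌊a + c * Q2⌋, ?_⟩
        have hfr : q1 = a + c * Q2 - ⌊a + c * Q2⌋ := rfl
        linarith [hfr ▸ h]
      have hq1pos : 0 < q1 := lt_of_le_of_ne (Int.fract_nonneg _) (Ne.symm hq1ne)
      refine ⟨hy2, ⟨q1, y2, Q2, p2⟩, ⟨⟨hq1pos, hq1lt⟩, hy2, hQ2, hp2⟩, ?_, rfl, rfl, hP2⟩
      rw [coe_one_eq_iff]
      refine ⟨-⌊a + c * Q2⌋, ?_⟩
      have hfr : q1 = a + c * Q2 - ⌊a + c * Q2⌋ := rfl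
      push_cast
      linarith
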